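/- Let n ≥ 1 and m = 2n, and let σ be a fixed-point-free involution of Fin m (a permutation with σ ∘ σ = id and σ(i) ≠ i for all i). Then the set W_σ = {x : Fin m → ℝ | x(σ i) = −x(i) for all i} is a linear subspace of ℝ^m of dimension n, and it is contained in the zero locus of the elementary symmetric polynomial of degree m − 1: for every x ∈ W_σ, e_{m-1}(x) = 0. -/

import Mathlib

/-- for a fixed-point-free involution `σ` of `Fin (2n)`, the set
`W_σ = {x | x (σ i) = -x i for all i}` is a linear subspace of `ℝ^{2n}` of dimension `n`,
contained in the zero locus of the elementary symmetric polynomial of degree `2n - 1`. -/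
theorem antisymmetric_subspace_in_esymm_zero_locus (n : ℕ) (hn : 1 ≤ n)
    (σ : Equiv.Perm (Fin (2 * n))) (hinv : ∀ i, σ (σ i) = i) (hfpf : ∀ i, σ i ≠ i) :
    (∃ W : Submodule ℝ (Fin (2 * n) → ℝ),
        (W : Set (Fin (2 * n) → ℝ)) = {x | ∀ i, x (σ i) = -x i} ∧
        Module.finrank ℝ W = n) ∧
      ∀ x : Fin (2 * n) → ℝ, (∀ i, x (σ i) = -x i) →
        ∑ S ∈ (Finset.univ : Finset (Fin (2 * n))).powersetCard (2 * n - 1),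
          ∏ i ∈ S, x i = 0 := by
  constructor
  · set W : Submodule ℝ (Fin (2 * n) → ℝ) :=
      { carrier := {x | ∀ i, x (σ i) = -x i}
        add_mem' := by intro a b ha hb i; simp only [Pi.add_apply, ha i, hb i]; ring
        zero_mem' := by intro i; simp
        smul_mem' := by intro c x hx i; simp [hx i] } with hW
    refine ⟨W, rfl, ?_⟩
    set R := {i : Fin (2 * n) // i < σ i} with hR
    have hmem : ∀ x : Fin (2 * n) → ℝ, x ∈ W ↔ ∀ i, x (σ i) = -x i := fun x => Iff.rfl
    let φ : W →ₗ[ℝ] (R → ℝ) :=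
      { toFun := fun x r => (x : Fin (2 * n) → ℝ) r.1
        map_add' := fun _ _ => rfl
        map_smul' := fun _ _ => rfl }
    have hbij : Function.Bijective φ := by
      constructor
      · intro a b hab
        ext i
        rcases lt_trichotomy i (σ i) with h | h | h
        · exact congrFun hab ⟨i, h⟩
        · exact absurd h.symm (hfpf i)
        · have hσ : (σ i : Fin (2 * n)) < σ (σ i) := by rw [hinv]; exact h
          have := congrFun hab ⟨σ i, hσ⟩
          have ha := ((hmem a).mp a.2) (σ i)
          have hb := ((hmem b).mp b.2) (σ i)
          rw [hinv] at ha hb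
          have : (a : Fin (2 * n) → ℝ) (σ i) = (b : Fin (2 * n) → ℝ) (σ i) := this
          rw [ha, hb, this]
      · intro y
        have hσlt : ∀ i : Fin (2 * n), ¬ i < σ i → σ i < σ (σ i) := by
          intro i h
          rw [hinv]
          rcases lt_trichotomy i (σ i) with h' | h' | h'
          · exact absurd h' h
          · exact absurd h'.symm (hfpf i)
          · exact h'
        refine ⟨⟨fun i => if h : i < σ i then y ⟨i, h⟩ else -y ⟨σ i, hσlt i h⟩, ?_⟩, ?_⟩
        · intro i
          by_cases h : i < σ i
          · have h2 : ¬ σ i < i := fun h' => absurd (h.trans h') (lt_irrefl i)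
            simp only [hinv, dif_neg h2, dif_pos h]
          · have h2 : σ i < i := by have := hσlt i h; rwa [hinv] at this
            simp only [hinv, dif_pos h2, dif_neg h, neg_neg]
        · ext r
          simp only [φ, LinearMap.coe_mk, AddHom.coe_mk]
          rw [dif_pos r.2]
    have := LinearEquiv.finrank_eq (LinearEquiv.ofBijective φ hbij)
    rw [this, Module.finrank_pi ℝ]
    -- Fintype.card R = n
    have hcard : Fintype.card R = n := by
      have key : (Finset.univ.filter (fun i : Fin (2 * n) => i < σ i)).card
          = (Finset.univ.filter (fun i : Fin (2 * n) => σ i < i)).card := by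
        apply Finset.card_nbij (fun i => σ i)
        · intro i hi
          simp only [Finset.mem_coe, Finset.mem_filter, Finset.mem_univ, true_and] at hi ⊢
          rw [hinv]; exact hi
        · intro a ha b hb hab
          simpa using congrArg σ.symm hab
        · intro b hb
          simp only [Finset.coe_filter, Set.mem_setOf_eq, Finset.mem_univ, true_and,
            Set.mem_image] at hb ⊢
          exact ⟨σ b, by rw [hinv]; exact hb, hinv b⟩
      have hunion : (Finset.univ.filter (fun i : Fin (2 * n) => i < σ i)) ∪
          (Finset.univ.filter (fun i : Fin (2 * n) => σ i < i)) = Finset.univ := by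
        ext i
        simp only [Finset.mem_union, Finset.mem_filter, Finset.mem_univ, true_and, iff_true]
        rcases lt_trichotomy i (σ i) with h | h | h
        · exact Or.inl h
        · exact absurd h.symm (hfpf i)
        · exact Or.inr h
      have hdisj : Disjoint (Finset.univ.filter (fun i : Fin (2 * n) => i < σ i))
          (Finset.univ.filter (fun i : Fin (2 * n) => σ i < i)) := by
        rw [Finset.disjoint_filter]
        intro i _ h1 h2
        exact absurd (h1.trans h2) (lt_irrefl i)
      have := Finset.card_union_of_disjoint hdisj
      rw [hunion, ← key] at this
      simp only [Finset.card_univ, Fintype.card_fin] at this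
      rw [Fintype.card_subtype]
      omega
    rw [hcard]
  · intro x hx
    have hm : 1 ≤ 2 * n := by omega
    have hswap : ∀ j : Fin (2 * n),
        (∏ i ∈ Finset.univ.erase (σ j), x i) = -∏ i ∈ Finset.univ.erase j, x i := by
      intro j
      have hj1 : σ j ∈ Finset.univ.erase j := by
        simp [Finset.mem_erase, hfpf j]
      have hj2 : j ∈ Finset.univ.erase (σ j) := by
        simp [Finset.mem_erase]
        intro h; exact hfpf j h.symm
      rw [← Finset.mul_prod_erase _ x hj1, ← Finset.mul_prod_erase _ x hj2,
        Finset.erase_right_comm, hx j]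
      ring
    have himg : (Finset.univ : Finset (Fin (2 * n))).powersetCard (2 * n - 1)
        = Finset.univ.image (fun j : Fin (2 * n) => Finset.univ.erase j) := by
      ext S
      simp only [Finset.mem_powersetCard_univ, Finset.mem_image, Finset.mem_univ, true_and]
      constructor
      · intro hS
        have hc : Sᶜ.card = 1 := by
          rw [Finset.card_compl, hS]
          simp only [Fintype.card_fin]
          omega
        obtain ⟨j, hj⟩ := Finset.card_eq_one.mp hc
        exact ⟨j, by rw [← Finset.compl_singleton, ← hj, compl_compl]⟩
      · rintro ⟨j, rfl⟩
        rw [Finset.card_erase_of_mem (Finset.mem_univ j), Finset.card_univ, Fintype.card_fin]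
    have hinj : ∀ a ∈ (Finset.univ : Finset (Fin (2 * n))), ∀ b ∈ Finset.univ,
        Finset.univ.erase a = Finset.univ.erase b → a = b := by
      intro a _ b _ hab
      by_contra hne
      have : a ∈ Finset.univ.erase b := Finset.mem_erase.mpr ⟨hne, Finset.mem_univ a⟩
      rw [← hab] at this
      exact (Finset.mem_erase.mp this).1 rfl
    rw [himg, Finset.sum_image hinj]
    have h1 : ∑ j : Fin (2 * n), ∏ i ∈ Finset.univ.erase j, x i
        = ∑ j : Fin (2 * n), ∏ i ∈ Finset.univ.erase (σ j), x i :=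
      (Equiv.sum_comp σ _).symm
    have h2 : ∑ j : Fin (2 * n), ∏ i ∈ Finset.univ.erase (σ j), x i
        = -∑ j : Fin (2 * n), ∏ i ∈ Finset.univ.erase j, x i := by
      rw [← Finset.sum_neg_distrib]
      exact Finset.sum_congr rfl fun j _ => hswap j
    linarith [h1.trans h2]
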